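/- arXiv:1412.5213 — 2 statements merged into one kernel-verified Lean document; each statement's English description precedes it below -/
import Mathlib

section
/- The three-qubit XOR state ψ_XOR is strongly contextual for the measurements Y and Z at each party: there is no global assignment g : Fin 3 → M → Bool such that for every context c : Fin 3 → M, the induced outcome i ↦ g i (c i) has nonzero amplitude with respect to ψ_XOR. -/
noncomputable section

/-- Inner product of two `n`-qubit states `(Fin n → Bool) → ℂ`. -/
def inner' {n : ℕ} (φ ψ : (Fin n → Bool) → ℂ) : ℂ :=
  ∑ s : Fin n → Bool, (starRingEnd ℂ) (φ s) * ψ s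

/-- Tensor product of local vectors. -/
def tensor {n : ℕ} (v : Fin n → Bool → ℂ) : (Fin n → Bool) → ℂ :=
  fun s => ∏ i, v i (s i)

/-- `Y`-measurement eigenvectors: `yvec false = (1/√2, i/√2)`,
`yvec true = (1/√2, -i/√2)`. -/
def yvec (b : Bool) : Bool → ℂ :=
  fun b' => if b' then (if b then -Complex.I else Complex.I) * (Real.sqrt 2 : ℂ)⁻¹
    else (Real.sqrt 2 : ℂ)⁻¹

/-- `Z`-measurement eigenvectors. -/
def evec (b : Bool) : Bool → ℂ := fun b' => if b = b' then 1 else 0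

/-- The measurement set: `Y` or `Z` at each site. -/
inductive M | Y | Z

/-- The eigenvector family of each measurement. -/
def mvec : M → Bool → Bool → ℂ
  | M.Y => yvec
  | M.Z => evec

/-- The amplitude of outcome `o` in context `c` for a 3-qubit state `ψ`. -/
def amp (ψ : (Fin 3 → Bool) → ℂ) (c : Fin 3 → M) (o : Fin 3 → Bool) : ℂ :=
  inner' (tensor fun i => mvec (c i) (o i)) ψ

/-- A global assignment is consistent if its induced outcome is possible in
every context. -/
def consistent (ψ : (Fin 3 → Bool) → ℂ) (g : Fin 3 → M → Bool) : Prop :=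
  ∀ c : Fin 3 → M, amp ψ c (fun i => g i (c i)) ≠ 0

/-- The three-qubit XOR state. -/
def psiXOR : (Fin 3 → Bool) → ℂ :=
  fun s => if s 2 = Bool.xor (s 0) (s 1) then (1/2 : ℂ) else 0


/-- Auxiliary equivalence for expanding sums over `Fin 3 → Bool`. -/
def e3 : Bool × Bool × Bool ≃ (Fin 3 → Bool) where
  toFun p := ![p.1, p.2.1, p.2.2]
  invFun s := (s 0, s 1, s 2)
  left_inv p := rfl
  right_inv s := by funext i; fin_cases i <;> rfl

lemma sum_fun3 (f : (Fin 3 → Bool) → ℂ) : ∑ s, f s =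
    f ![false,false,false] + f ![false,false,true] + f ![false,true,false] + f ![false,true,true] +
    f ![true,false,false] + f ![true,false,true] + f ![true,true,false] + f ![true,true,true] := by
  rw [← e3.sum_comp]
  have he3 : ∀ p, e3 p = ![p.1, p.2.1, p.2.2] := fun _ => rfl
  simp [Fintype.sum_prod_type, Fintype.sum_bool, he3]
  ring

lemma ampZZZ (a b c : Bool) (h : c ≠ xor a b) :
    amp psiXOR ![M.Z, M.Z, M.Z] ![a, b, c] = 0 := by
  rw [amp, inner', sum_fun3]
  simp only [tensor, Fin.prod_univ_three, psiXOR, mvec, evec, yvec]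
  rcases a <;> rcases b <;> rcases c <;> simp_all [evec, yvec]

lemma ampYYZ (a b c : Bool) (h : xor (xor a b) c = false) :
    amp psiXOR ![M.Y, M.Y, M.Z] ![a, b, c] = 0 := by
  rw [amp, inner', sum_fun3]
  simp only [tensor, Fin.prod_univ_three, psiXOR, mvec, evec, yvec]
  rcases a <;> rcases b <;> rcases c <;> simp_all [evec, yvec, map_mul, map_inv₀, map_neg, Complex.conj_I, Complex.conj_ofReal] <;> ring_nf <;> simp [Complex.I_sq] <;> ring_nf

lemma ampYZY (a b c : Bool) (h : xor (xor a b) c = false) :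
    amp psiXOR ![M.Y, M.Z, M.Y] ![a, b, c] = 0 := by
  rw [amp, inner', sum_fun3]
  simp only [tensor, Fin.prod_univ_three, psiXOR, mvec, evec, yvec]
  rcases a <;> rcases b <;> rcases c <;> simp_all [evec, yvec, map_mul, map_inv₀, map_neg, Complex.conj_I, Complex.conj_ofReal] <;> ring_nf <;> simp [Complex.I_sq] <;> ring_nf

lemma ampZYY (a b c : Bool) (h : xor (xor a b) c = false) :
    amp psiXOR ![M.Z, M.Y, M.Y] ![a, b, c] = 0 := by
  rw [amp, inner', sum_fun3]
  simp only [tensor, Fin.prod_univ_three, psiXOR, mvec, evec, yvec]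
  rcases a <;> rcases b <;> rcases c <;> simp_all [evec, yvec, map_mul, map_inv₀, map_neg, Complex.conj_I, Complex.conj_ofReal] <;> ring_nf <;> simp [Complex.I_sq] <;> ring_nf

/-- The XOR state is strongly contextual for `Y`/`Z` measurements: no global
assignment induces a possible outcome in every context. -/
theorem xor_strongly_contextual :
    ¬ ∃ g : Fin 3 → M → Bool, consistent psiXOR g := by
  rintro ⟨g, hg⟩
  have key : ∀ c : Fin 3 → M, (fun i => g i (c i)) = ![g 0 (c 0), g 1 (c 1), g 2 (c 2)] := by
    intro c; funext i; fin_cases i <;> rfl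
  have hZ := hg ![M.Z, M.Z, M.Z]
  have hA := hg ![M.Y, M.Y, M.Z]
  have hB := hg ![M.Y, M.Z, M.Y]
  have hC := hg ![M.Z, M.Y, M.Y]
  rw [key] at hZ hA hB hC
  simp only [Matrix.cons_val_zero, Matrix.cons_val_one, Matrix.head_cons,
    Matrix.cons_val_two, Matrix.tail_cons] at hZ hA hB hC
  have h1 : g 2 M.Z = xor (g 0 M.Z) (g 1 M.Z) := by
    by_contra h; exact hZ (ampZZZ _ _ _ h)
  have h2 : xor (xor (g 0 M.Y) (g 1 M.Y)) (g 2 M.Z) = true := by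
    by_contra h; exact hA (ampYYZ _ _ _ (by simpa using h))
  have h3 : xor (xor (g 0 M.Y) (g 1 M.Z)) (g 2 M.Y) = true := by
    by_contra h; exact hB (ampYZY _ _ _ (by simpa using h))
  have h4 : xor (xor (g 0 M.Z) (g 1 M.Y)) (g 2 M.Y) = true := by
    by_contra h; exact hC (ampZYY _ _ _ (by simpa using h))
  clear hZ hA hB hC hg key
  revert h1 h2 h3 h4
  generalize g 0 M.Y = a
  generalize g 1 M.Y = b
  generalize g 2 M.Y = c
  generalize g 0 M.Z = p
  generalize g 1 M.Z = q
  generalize g 2 M.Z = r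
  revert a b c p q r
  decide
end
end

section
/- For all a, b, c : Bool, the amplitude of the outcome (a, b, c) for the XOR state in the context measuring Y at the first two parties and Z at the third is nonzero if and only if xor a (xor b c) = true; that is, ⟨y(a) ⊗ y(b) ⊗ e(c), ψ_XOR⟩ ≠ 0 ↔ xor a (xor b c) = true. -/
noncomputable section

lemma sum_fin3' (f : (Fin 3 → Bool) → ℂ) :
    ∑ s : Fin 3 → Bool, f s = ∑ x : Bool, ∑ y : Bool, ∑ z : Bool, f ![x,y,z] := by
  rw [← (Fin.consEquiv (fun _ : Fin 3 => Bool)).sum_comp, Fintype.sum_prod_type]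
  congr 1; ext x
  rw [← (Fin.consEquiv (fun _ : Fin 2 => Bool)).sum_comp, Fintype.sum_prod_type]
  congr 1; ext y
  rw [← (Fin.consEquiv (fun _ : Fin 1 => Bool)).sum_comp, Fintype.sum_prod_type]
  congr 1; ext z
  rw [Fintype.sum_eq_single (finZeroElim : Fin 0 → Bool)
    (fun g hg => absurd (funext fun i => i.elim0) hg)]
  congr 1

/-- The amplitude of outcome `(a,b,c)` for the XOR state in the `YYZ` context is
nonzero iff `a ⊕ b ⊕ c = true`. -/
theorem xor_yyz_support (a b c : Bool) :
    inner' (tensor ![yvec a, yvec b, evec c]) psiXOR ≠ 0 ↔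
      Bool.xor a (Bool.xor b c) = true := by
  have hs : (Real.sqrt 2 : ℂ) ≠ 0 :=
    Complex.ofReal_ne_zero.mpr (by positivity)
  have h2 : ((Real.sqrt 2 : ℝ) : ℂ) ^ 2 = 2 := by
    rw [← Complex.ofReal_pow, Real.sq_sqrt] <;> norm_num
  rw [inner', sum_fin3']
  cases a <;> cases b <;> cases c <;>
    simp [tensor, psiXOR, yvec, evec, Fin.prod_univ_three, Fintype.sum_bool,
      map_mul, map_inv₀, Complex.conj_ofReal, Complex.I_ne_zero, hs,
      Matrix.cons_val_zero, Matrix.cons_val_one, h2] <;>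
    ring_nf <;>
    simp [h2] <;>
    simp [Complex.ext_iff, hs, Complex.I_ne_zero] <;>
    norm_num
end
end
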